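/- Let {a_k}_{k=1}^m ⊂ ℝ³ with m ≥ 3 be non-coplanar and b_k = M a_k where M = diag(1,−1,1). Then there do not exist unitaries U_A, U_B ∈ SU(2) such that U_A(a_k·σ)U_A† = U_B(b_k·σ)U_B† for all k. In other words, mirror-symmetric non-coplanar qubit measurement pairs cannot be made identical by local unitaries. -/

import Mathlib

open Matrix

noncomputable def σx : Matrix (Fin 2) (Fin 2) ℂ := !![0, 1; 1, 0]
noncomputable def σy : Matrix (Fin 2) (Fin 2) ℂ := !![0, -Complex.I; Complex.I, 0]
noncomputable def σz : Matrix (Fin 2) (Fin 2) ℂ := !![1, 0; 0, -1]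

noncomputable def dotSigma (v : Fin 3 → ℝ) : Matrix (Fin 2) (Fin 2) ℂ :=
  (v 0 : ℂ) • σx + (v 1 : ℂ) • σy + (v 2 : ℂ) • σz

/-- The mirror reflection `M = diag(1, −1, 1)` acting on `ℝ³`. -/
def mirror (v : Fin 3 → ℝ) : Fin 3 → ℝ := ![v 0, -v 1, v 2]

def triple (u v w : Fin 3 → ℝ) : ℝ :=
  u 0 * (v 1 * w 2 - v 2 * w 1) + u 1 * (v 2 * w 0 - v 0 * w 2) + u 2 * (v 0 * w 1 - v 1 * w 0)

lemma dotSigma_eq (v : Fin 3 → ℝ) :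
    dotSigma v = !![(v 2 : ℂ), (v 0 : ℂ) - Complex.I * (v 1 : ℂ);
                    (v 0 : ℂ) + Complex.I * (v 1 : ℂ), -(v 2 : ℂ)] := by
  unfold dotSigma σx σy σz
  ext i j
  fin_cases i <;> fin_cases j <;> simp <;> ring

lemma trace3 (u v w : Fin 3 → ℝ) :
    Matrix.trace (dotSigma u * dotSigma v * dotSigma w)
      = 2 * Complex.I * (triple u v w : ℝ) := by
  rw [dotSigma_eq, dotSigma_eq, dotSigma_eq]
  simp [Matrix.trace_fin_two, Matrix.mul_apply, Fin.sum_univ_succ, triple]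
  ring_nf

lemma triple_mirror (u v w : Fin 3 → ℝ) :
    triple (mirror u) (mirror v) (mirror w) = - triple u v w := by
  simp [triple, mirror]; ring

lemma trace_conj3 (U X Y Z : Matrix (Fin 2) (Fin 2) ℂ) (h : Uᴴ * U = 1) :
    Matrix.trace ((U * X * Uᴴ) * (U * Y * Uᴴ) * (U * Z * Uᴴ))
      = Matrix.trace (X * Y * Z) := by
  have e : (U * X * Uᴴ) * (U * Y * Uᴴ) * (U * Z * Uᴴ) = U * (X * Y * Z) * Uᴴ := by
    simp only [Matrix.mul_assoc, ← Matrix.mul_assoc Uᴴ U, h, Matrix.one_mul]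
  rw [e, Matrix.trace_mul_comm, ← Matrix.mul_assoc, ← Matrix.mul_assoc, h, Matrix.one_mul]

/-- Mirror-symmetric non-coplanar qubit measurements cannot be made identical by
local unitaries: if `{a_k}` (`m ≥ 3`) span `ℝ³` and `b_k = diag(1,−1,1) a_k`,
then there are no `U_A, U_B ∈ SU(2)` with `U_A (a_k·σ) U_A† = U_B (b_k·σ) U_B†`. -/
theorem no_local_unitaries_symmetrize_mirror {m : ℕ} (hm : 3 ≤ m)
    (a : Fin m → (Fin 3 → ℝ))
    (hspan : Submodule.span ℝ (Set.range a) = ⊤)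
    (b : Fin m → (Fin 3 → ℝ)) (hb : ∀ k, b k = mirror (a k)) :
    ¬ ∃ UA UB : Matrix (Fin 2) (Fin 2) ℂ,
        UA ∈ Matrix.unitaryGroup (Fin 2) ℂ ∧ UA.det = 1 ∧
        UB ∈ Matrix.unitaryGroup (Fin 2) ℂ ∧ UB.det = 1 ∧
        ∀ k, UA * dotSigma (a k) * UAᴴ = UB * dotSigma (b k) * UBᴴ := by
  rintro ⟨UA, UB, hUA, -, hUB, -, hcomm⟩
  have hA : UAᴴ * UA = 1 := by
    simpa [Matrix.star_eq_conjTranspose] using hUA.1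
  have hB : UBᴴ * UB = 1 := by
    simpa [Matrix.star_eq_conjTranspose] using hUB.1
  -- all triple products vanish
  have key : ∀ i j l : Fin m, triple (a i) (a j) (a l) = 0 := by
    intro i j l
    have e1 := trace_conj3 UA (dotSigma (a i)) (dotSigma (a j)) (dotSigma (a l)) hA
    have e2 := trace_conj3 UB (dotSigma (b i)) (dotSigma (b j)) (dotSigma (b l)) hB
    rw [hcomm i, hcomm j, hcomm l] at e1
    have h1 : Matrix.trace (dotSigma (a i) * dotSigma (a j) * dotSigma (a l))
        = Matrix.trace (dotSigma (b i) * dotSigma (b j) * dotSigma (b l)) :=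
      e1.symm.trans e2
    rw [trace3, trace3, hb, hb, hb, triple_mirror] at h1
    have h2 : (triple (a i) (a j) (a l) : ℂ) = (-(triple (a i) (a j) (a l)) : ℝ) := by
      have hI : (2 : ℂ) * Complex.I ≠ 0 := by
        simp [Complex.I_ne_zero]
      exact mul_left_cancel₀ hI h1
    have h3 : triple (a i) (a j) (a l) = -(triple (a i) (a j) (a l)) := by
      exact_mod_cast h2
    linarith
  -- extract a linearly independent triple from the spanning family
  obtain ⟨s, hs_sub, hs_span, hs_li⟩ := exists_linearIndependent ℝ (Set.range a)
  rw [hspan] at hs_span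
  have hfin : s.Finite := hs_li.setFinite
  haveI : Fintype s := hfin.fintype
  have hcard : hfin.toFinset.card = 3 := by
    have hBa : Module.Basis s ℝ (Fin 3 → ℝ) :=
      Module.Basis.mk hs_li (by rw [Subtype.range_coe]; exact hs_span.ge)
    have h1 : Module.finrank ℝ (Fin 3 → ℝ) = Fintype.card s :=
      Module.finrank_eq_card_basis hBa
    have h2 : Module.finrank ℝ (Fin 3 → ℝ) = 3 := by simp
    rw [Set.Finite.card_toFinset, ← h1, h2]
  obtain ⟨x, y, z, hxy, hxz, hyz, hset⟩ := Finset.card_eq_three.mp hcard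
  have hxs : x ∈ s := by have : x ∈ hfin.toFinset := by rw [hset]; simp
                         simpa using this
  have hys : y ∈ s := by have : y ∈ hfin.toFinset := by rw [hset]; simp
                         simpa using this
  have hzs : z ∈ s := by have : z ∈ hfin.toFinset := by rw [hset]; simp
                         simpa using this
  -- ![x,y,z] is linearly independent
  have hli : LinearIndependent ℝ ![x, y, z] := by
    have hf : ∀ i : Fin 3, (![x, y, z] i) ∈ s := by
      intro i; fin_cases i <;> simpa
    let f : Fin 3 → s := fun i => ⟨![x, y, z] i, hf i⟩
    have hinj : Function.Injective f := by
      intro i j hij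
      have : (![x, y, z] i) = ![x, y, z] j := congrArg Subtype.val hij
      fin_cases i <;> fin_cases j <;> simp_all
    have := hs_li.comp f hinj
    exact this
  -- hence its triple product is nonzero
  have hdet : triple x y z ≠ 0 := by
    have hunit : IsUnit (Matrix.of ![x, y, z]) := by
      rw [← Matrix.linearIndependent_rows_iff_isUnit]
      simpa using hli
    have hdne : (Matrix.of ![x, y, z]).det ≠ 0 :=
      IsUnit.ne_zero ((Matrix.isUnit_iff_isUnit_det _).mp hunit)
    intro h0
    apply hdne
    rw [Matrix.det_fin_three]
    simp only [Matrix.of_apply, Matrix.cons_val', Matrix.cons_val_zero, Matrix.cons_val_one,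
      Matrix.head_cons, Matrix.head_fin_const, Matrix.empty_val', Matrix.cons_val_fin_one,
      Matrix.cons_val_two, Matrix.tail_cons]
    unfold triple at h0
    linarith [h0]
  -- but x, y, z come from the family a
  obtain ⟨i, hi⟩ := hs_sub hxs
  obtain ⟨j, hj⟩ := hs_sub hys
  obtain ⟨l, hl⟩ := hs_sub hzs
  exact hdet (by rw [← hi, ← hj, ← hl]; exact key i j l)
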